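/- Let p > 3 be prime and let x, y ∈ ℤ/p be nonzero. Then there exists w ∈ ℤ/p such that the pair of binary quadratic forms (x·a², y·b²) is equivalent to (a² + w·b², 2ab). -/
import Mathlib


/-- A binary quadratic form over `ZMod p`, recorded by its coefficients:
`Q(a,b) = c20·a² + c11·a·b + c02·b²`. -/
structure BQF (p : ℕ) where
  c20 : ZMod p
  c11 : ZMod p
  c02 : ZMod p

/-- Evaluation of a binary quadratic form. -/
def BQF.eval {p : ℕ} (Q : BQF p) (a b : ZMod p) : ZMod p :=
  Q.c20 * a ^ 2 + Q.c11 * a * b + Q.c02 * b ^ 2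

/-- Two pairs `(Q₁, Q₂)` and `(Q₁', Q₂')` of binary quadratic forms over `ZMod p`
are equivalent if there are `R ∈ GL₂(ℤ/p)` and `S ∈ GL₂(ℤ/p)` with `det S = ±1`
such that `Qᵢ(R·(a,b)) = sᵢ₁·Q₁'(a,b) + sᵢ₂·Q₂'(a,b)` for all `(a,b)` and `i = 1,2`. -/
def PairEquiv {p : ℕ} (P P' : BQF p × BQF p) : Prop :=
  ∃ R S : Matrix (Fin 2) (Fin 2) (ZMod p),
    IsUnit R.det ∧ IsUnit S.det ∧ (S.det = 1 ∨ S.det = -1) ∧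
    (∀ a b : ZMod p,
      P.1.eval (R 0 0 * a + R 0 1 * b) (R 1 0 * a + R 1 1 * b) =
        S 0 0 * P'.1.eval a b + S 0 1 * P'.2.eval a b) ∧
    (∀ a b : ZMod p,
      P.2.eval (R 0 0 * a + R 0 1 * b) (R 1 0 * a + R 1 1 * b) =
        S 1 0 * P'.1.eval a b + S 1 1 * P'.2.eval a b)

/-- For nonzero `x, y ∈ ℤ/p`, the pair `(x·a², y·b²)` is equivalent to
`(a² + w·b², 2ab)` for some `w ∈ ℤ/p`. -/
theorem diag_pair_equiv_standard (p : ℕ) [Fact p.Prime] (hp : 3 < p)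
    (x y : ZMod p) (hx : x ≠ 0) (hy : y ≠ 0) :
    ∃ w : ZMod p, PairEquiv (⟨x, 0, 0⟩, ⟨0, 0, y⟩) (⟨1, 0, w⟩, ⟨0, 2, 0⟩) := by
  have hprime : p.Prime := Fact.out
  have h2 : (2 : ZMod p) ≠ 0 := by
    intro h
    have h2' : ((2 : ℕ) : ZMod p) = 0 := by exact_mod_cast h
    have := (ZMod.natCast_eq_zero_iff 2 p).mp h2'
    have := Nat.le_of_dvd two_pos this
    omega
  have h2xy : (2 : ZMod p) * x * y ≠ 0 := by
    exact mul_ne_zero (mul_ne_zero h2 hx) hy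
  set t : ZMod p := -((2 : ZMod p) * x * y)⁻¹ with ht
  have ht0 : t ≠ 0 := by
    rw [ht]
    exact neg_ne_zero.mpr (inv_ne_zero h2xy)
  refine ⟨t ^ 2, !![1, t; 1, -t], !![x, x * t; y, -(y * t)], ?_, ?_, ?_, ?_, ?_⟩
  · rw [Matrix.det_fin_two_of]
    simp only [isUnit_iff_ne_zero]
    intro h
    apply ht0
    have : (-2 : ZMod p) * t = 0 := by linear_combination h
    have h2' : (-2 : ZMod p) ≠ 0 := by simpa using h2
    exact (mul_eq_zero.mp this).resolve_left h2' 
  · rw [Matrix.det_fin_two_of]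
    simp only [isUnit_iff_ne_zero]
    intro h
    apply ht0
    have hxy2 : (-2 : ZMod p) * x * y ≠ 0 := by
      refine mul_ne_zero (mul_ne_zero ?_ hx) hy
      simpa using h2
    have : (-2 : ZMod p) * x * y * t = 0 := by linear_combination h
    exact (mul_eq_zero.mp this).resolve_left hxy2
  · left
    rw [Matrix.det_fin_two_of, ht]
    field_simp
    ring
  · intro a b
    simp only [BQF.eval, Matrix.cons_val', Matrix.cons_val_zero, Matrix.cons_val_one,
      Matrix.head_cons, Matrix.empty_val', Matrix.cons_val_fin_one, Matrix.head_fin_const,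
      Matrix.of_apply]
    ring
  · intro a b
    simp only [BQF.eval, Matrix.cons_val', Matrix.cons_val_zero, Matrix.cons_val_one,
      Matrix.head_cons, Matrix.empty_val', Matrix.cons_val_fin_one, Matrix.head_fin_const,
      Matrix.of_apply]
    ring
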